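/- Suppose φ : M_m(ℂ) → M_n(ℂ) is a positive linear map which is unital (φ(I) = I), irreducible (every X ∈ M_n(ℂ) commuting with φ(a) for all a ∈ M_m(ℂ) is a scalar multiple of the identity), and satisfies ker φ̂ = N_φ. Then φ is exposed. -/

import Mathlib

open Matrix ComplexOrder

noncomputable section

/-- A linear map between matrix algebras is positive if it sends positive
semidefinite matrices to positive semidefinite matrices. -/
def IsPosMap {m n : ℕ} (φ : Matrix (Fin m) (Fin m) ℂ →ₗ[ℂ] Matrix (Fin n) (Fin n) ℂ) : Prop :=
  ∀ a : Matrix (Fin m) (Fin m) ℂ, a.PosSemidef → (φ a).PosSemidef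

/-- A positive linear map `φ` is exposed (generates an exposed ray of the cone of
positive maps) if every positive map `ψ` such that `⟨η, φ(a) η⟩ = 0` implies
`⟨η, ψ(a) η⟩ = 0` (for `a` positive semidefinite) is a nonnegative multiple of `φ`. -/
def IsExposedMap {m n : ℕ} (φ : Matrix (Fin m) (Fin m) ℂ →ₗ[ℂ] Matrix (Fin n) (Fin n) ℂ) :
    Prop :=
  IsPosMap φ ∧
    ∀ ψ : Matrix (Fin m) (Fin m) ℂ →ₗ[ℂ] Matrix (Fin n) (Fin n) ℂ, IsPosMap ψ →
      (∀ a : Matrix (Fin m) (Fin m) ℂ, a.PosSemidef → ∀ η : Fin n → ℂ,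
        star η ⬝ᵥ (φ a) *ᵥ η = 0 → star η ⬝ᵥ (ψ a) *ᵥ η = 0) →
      ∃ c : ℝ, 0 ≤ c ∧ ψ = (c : ℂ) • φ

/-- The map `Ad_s : x ↦ s* x s`. -/
def adMap {m n : ℕ} (s : Matrix (Fin m) (Fin n) ℂ) :
    Matrix (Fin m) (Fin m) ℂ →ₗ[ℂ] Matrix (Fin n) (Fin n) ℂ where
  toFun x := sᴴ * x * s
  map_add' x y := by simp [Matrix.add_mul, Matrix.mul_add]
  map_smul' c x := by simp [Matrix.smul_mul, Matrix.mul_smul]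

/-- The transpose map on matrices, as a linear map. -/
def transposeLM (m : ℕ) : Matrix (Fin m) (Fin m) ℂ →ₗ[ℂ] Matrix (Fin m) (Fin m) ℂ where
  toFun x := xᵀ
  map_add' x y := Matrix.transpose_add x y
  map_smul' c x := by simp

/-- Woronowicz's map `φ̂ : M_m(ℂ) ⊗ ℂ^n → ℂ^n`, determined by `a ⊗ η ↦ φ(a) η`. -/
def hatMap {m n : ℕ} (φ : Matrix (Fin m) (Fin m) ℂ →ₗ[ℂ] Matrix (Fin n) (Fin n) ℂ) :
    TensorProduct ℂ (Matrix (Fin m) (Fin m) ℂ) (Fin n → ℂ) →ₗ[ℂ] (Fin n → ℂ) :=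
  TensorProduct.lift (Matrix.toLin'.toLinearMap.comp φ)

/-- The subspace `N_φ ⊆ M_m(ℂ) ⊗ ℂ^n` spanned by the simple tensors `a ⊗ η`
with `a` positive semidefinite and `φ(a) η = 0`. -/
def Nspace {m n : ℕ} (φ : Matrix (Fin m) (Fin m) ℂ →ₗ[ℂ] Matrix (Fin n) (Fin n) ℂ) :
    Submodule ℂ (TensorProduct ℂ (Matrix (Fin m) (Fin m) ℂ) (Fin n → ℂ)) :=
  Submodule.span ℂ
    {x | ∃ (a : Matrix (Fin m) (Fin m) ℂ) (η : Fin n → ℂ),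
      a.PosSemidef ∧ (φ a) *ᵥ η = 0 ∧ x = a ⊗ₜ[ℂ] η}

private lemma herm_decomp {k : ℕ} (a : Matrix (Fin k) (Fin k) ℂ) (ha : a.IsHermitian) :
    ∃ p q : Matrix (Fin k) (Fin k) ℂ, p.PosSemidef ∧ q.PosSemidef ∧ a = p - q := by
  classical
  set U : Matrix (Fin k) (Fin k) ℂ := (ha.eigenvectorUnitary : Matrix (Fin k) (Fin k) ℂ) with hU
  set Dp : Matrix (Fin k) (Fin k) ℂ :=
    Matrix.diagonal (fun i => ((max (ha.eigenvalues i) 0 : ℝ) : ℂ)) with hDp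
  set Dq : Matrix (Fin k) (Fin k) ℂ :=
    Matrix.diagonal (fun i => ((max (-ha.eigenvalues i) 0 : ℝ) : ℂ)) with hDq
  have hDppsd : Dp.PosSemidef :=
    Matrix.PosSemidef.diagonal fun i => by
      simpa using Complex.zero_le_real.mpr (le_max_right _ _)
  have hDqpsd : Dq.PosSemidef :=
    Matrix.PosSemidef.diagonal fun i => by
      simpa using Complex.zero_le_real.mpr (le_max_right _ _)
  refine ⟨U * Dp * star U, U * Dq * star U, ?_, ?_, ?_⟩
  · simpa [Matrix.star_eq_conjTranspose] using hDppsd.mul_mul_conjTranspose_same U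
  · simpa [Matrix.star_eq_conjTranspose] using hDqpsd.mul_mul_conjTranspose_same U
  · have hd : Dp - Dq = Matrix.diagonal (RCLike.ofReal ∘ ha.eigenvalues) := by
      have hfun : (fun i => ((max (ha.eigenvalues i) 0 : ℝ) : ℂ) -
          ((max (-ha.eigenvalues i) 0 : ℝ) : ℂ)) = RCLike.ofReal ∘ ha.eigenvalues := by
        funext i
        rw [← Complex.ofReal_sub, max_zero_sub_max_neg_zero_eq_self]
        rfl
      rw [hDp, hDq, Matrix.diagonal_sub, hfun]
    calc a = U * Matrix.diagonal (RCLike.ofReal ∘ ha.eigenvalues) * star U :=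
        ha.spectral_theorem
      _ = U * (Dp - Dq) * star U := by rw [hd]
      _ = U * Dp * star U - U * Dq * star U := by
        rw [Matrix.mul_sub, Matrix.sub_mul]

private lemma posmap_herm {m n : ℕ}
    {θ : Matrix (Fin m) (Fin m) ℂ →ₗ[ℂ] Matrix (Fin n) (Fin n) ℂ} (h : IsPosMap θ)
    {a : Matrix (Fin m) (Fin m) ℂ} (ha : a.IsHermitian) : (θ a).IsHermitian := by
  obtain ⟨p, q, hp, hq, rfl⟩ := herm_decomp a ha
  rw [map_sub]
  exact (h p hp).1.sub (h q hq).1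

private lemma split_herm {k : ℕ} (a : Matrix (Fin k) (Fin k) ℂ) :
    ∃ h g : Matrix (Fin k) (Fin k) ℂ, h.IsHermitian ∧ g.IsHermitian ∧
      a = h + Complex.I • g := by
  refine ⟨((1 : ℂ)/2) • (a + aᴴ), (-(Complex.I)/2) • (a - aᴴ), ?_, ?_, ?_⟩
  · unfold Matrix.IsHermitian
    rw [Matrix.conjTranspose_smul, Matrix.conjTranspose_add,
      Matrix.conjTranspose_conjTranspose]
    simp [add_comm]
  · unfold Matrix.IsHermitian
    rw [Matrix.conjTranspose_smul, Matrix.conjTranspose_sub,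
      Matrix.conjTranspose_conjTranspose]
    have hs : star (-(Complex.I)/2) = Complex.I/2 := by simp
    rw [hs]
    module
  · have h2 : Complex.I • ((-(Complex.I)/2) • (a - aᴴ)) = ((1:ℂ)/2) • (a - aᴴ) := by
      rw [smul_smul]
      congr 1
      rw [← mul_div_assoc, mul_neg, Complex.I_mul_I, neg_neg]
    rw [h2]
    module


/-- (Woronowicz) A unital irreducible positive linear map `φ : M_m(ℂ) → M_n(ℂ)`
with `ker φ̂ = N_φ` is exposed. -/
theorem woronowicz_exposed {m n : ℕ}
    (φ : Matrix (Fin m) (Fin m) ℂ →ₗ[ℂ] Matrix (Fin n) (Fin n) ℂ)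
    (hpos : IsPosMap φ) (hunital : φ 1 = 1)
    (hirr : ∀ X : Matrix (Fin n) (Fin n) ℂ,
      (∀ a : Matrix (Fin m) (Fin m) ℂ, X * φ a = φ a * X) → ∃ c : ℂ, X = c • 1)
    (hker : LinearMap.ker (hatMap φ) = Nspace φ) :
    IsExposedMap φ := by
  refine ⟨hpos, fun ψ hψ hvan => ?_⟩
  have hNψ : Nspace φ ≤ LinearMap.ker (hatMap ψ) := by
    rw [Nspace, Submodule.span_le]
    rintro x ⟨a, η, haP, hφ0, rfl⟩
    have h0 : star η ⬝ᵥ (ψ a) *ᵥ η = 0 :=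
      hvan a haP η (by rw [hφ0, dotProduct_zero])
    have h1 : (ψ a) *ᵥ η = 0 := ((hψ a haP).dotProduct_mulVec_zero_iff η).mp h0
    simp [SetLike.mem_coe, LinearMap.mem_ker, hatMap, TensorProduct.lift.tmul,
      Matrix.toLin'_apply, h1]
  have hkψ : LinearMap.ker (hatMap φ) ≤ LinearMap.ker (hatMap ψ) := hker ▸ hNψ
  have key : ∀ (a : Matrix (Fin m) (Fin m) ℂ) (η : Fin n → ℂ),
      ψ a *ᵥ η = (ψ 1 * φ a) *ᵥ η := by
    intro a η
    have hx : (a ⊗ₜ[ℂ] η - (1 : Matrix (Fin m) (Fin m) ℂ) ⊗ₜ[ℂ] ((φ a) *ᵥ η)) ∈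
        LinearMap.ker (hatMap φ) := by
      simp [LinearMap.mem_ker, hatMap, TensorProduct.lift.tmul, map_sub,
        Matrix.toLin'_apply, hunital, Matrix.one_mulVec]
    have h2 := hkψ hx
    simp only [LinearMap.mem_ker, map_sub, hatMap, TensorProduct.lift.tmul,
      LinearMap.coe_comp, Function.comp_apply, LinearEquiv.coe_coe, Matrix.toLin'_apply,
      sub_eq_zero] at h2
    rw [h2, Matrix.mulVec_mulVec]
  have hfact : ∀ a, ψ a = ψ 1 * φ a := fun a =>
    Matrix.toLin'.injective (LinearMap.ext fun η => by
      simpa [Matrix.toLin'_apply] using key a η)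
  have hBpsd : (ψ 1).PosSemidef := hψ 1 Matrix.PosSemidef.one
  have hcommH : ∀ a : Matrix (Fin m) (Fin m) ℂ, a.IsHermitian → ψ 1 * φ a = φ a * ψ 1 := by
    intro a ha
    have h1 : (ψ a).IsHermitian := posmap_herm hψ ha
    have h3 : (ψ 1 * φ a)ᴴ = ψ 1 * φ a := by rw [← hfact a]; exact h1
    calc ψ 1 * φ a = (ψ 1 * φ a)ᴴ := h3.symm
      _ = (φ a)ᴴ * (ψ 1)ᴴ := Matrix.conjTranspose_mul _ _
      _ = φ a * ψ 1 := by rw [(posmap_herm hpos ha).eq, hBpsd.1.eq]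
  have hcomm : ∀ a, ψ 1 * φ a = φ a * ψ 1 := by
    intro a
    obtain ⟨h, g, hh, hg, rfl⟩ := split_herm a
    simp only [map_add, _root_.map_smul, Matrix.mul_add, Matrix.add_mul, Matrix.mul_smul,
      Matrix.smul_mul, hcommH h hh, hcommH g hg]
  obtain ⟨c, hc⟩ := hirr (ψ 1) hcomm
  have hψc : ∀ a, ψ a = c • φ a := by
    intro a
    rw [hfact a, hc, Matrix.smul_mul, Matrix.one_mul]
  rcases Nat.eq_zero_or_pos n with hn | hn
  · subst hn
    exact ⟨0, le_refl 0, LinearMap.ext fun a => Subsingleton.elim _ _⟩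
  · set i0 : Fin n := ⟨0, hn⟩
    have hcd : c = ψ 1 i0 i0 := by
      rw [hc]
      simp [Matrix.smul_apply, Matrix.one_apply_eq]
    have hge : (0 : ℂ) ≤ c := by
      rw [hcd]
      have h5 := hBpsd.dotProduct_mulVec_nonneg (Pi.single i0 1)
      simpa [dotProduct, Matrix.mulVec, Pi.single_apply, Finset.sum_ite_eq,
        mul_comm] using h5
    rw [Complex.nonneg_iff] at hge
    refine ⟨c.re, hge.1, ?_⟩
    have hcre : (c.re : ℂ) = c := Complex.ext rfl (by simp [hge.2.symm])
    exact LinearMap.ext fun a => by rw [LinearMap.smul_apply, hψc a, hcre]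
end
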